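/- In the forcing ℙ of measure-1/2 open-set names: for any condition (σ, R, q), any sequence ⟨(f_i, λ_i)⟩ naming a Schnorr null set N = ⋂_i U(f_i), and any i with 2^{-i} + q < 1/2, the triple (σ, S, q + 2^{-i}) with S = {g ∈ R_{q+2^{-i}} : Û(σ) ∪ U(f_i) ⊆ U(g) and ∃h ∈ R, U(h) ⊆ U(g)} is a condition extending (σ, R, q); in particular S is nonempty. -/

import Mathlib

open Filter MeasureTheory

namespace Paper

/-- Cantor space, viewed as the compact group `(ℤ/2)^ω` (so that bitwise XOR is addition). -/
abbrev Cantor := ℕ → ZMod 2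

/-- The fair-coin (Lebesgue) measure on Cantor space: normalized Haar measure. -/
noncomputable def lam : Measure Cantor :=
  (Measure.addHaar (Set.univ : Set Cantor))⁻¹ • Measure.addHaar

/-- The basic clopen set determined by a finite binary string. -/
def cyl (σ : List (ZMod 2)) : Set Cantor := {x | ∀ i : Fin σ.length, x i = σ.get i}

noncomputable instance : Encodable (ZMod 2) := Fintype.toEncodable _

noncomputable instance : Denumerable (List (ZMod 2)) :=
  Denumerable.ofEncodableOfInfinite _

/-- A fixed bijection `ℕ → 2^{<ω}`. -/
noncomputable def strOf (n : ℕ) : List (ZMod 2) := Denumerable.ofNat _ n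

/-- The open set named by `f ∈ ω^ω`. -/
def opn (f : ℕ → ℕ) : Set Cantor := ⋃ n, cyl (strOf (f n))

/-- The finite union of basic clopen sets coded by the entries of a finite string `σ`. -/
def Uhat (σ : List ℕ) : Set Cantor := ⋃ i : Fin σ.length, cyl (strOf (σ.get i))

/-- Prepending a finite string to an element of Cantor space. -/
def app (σ : List (ZMod 2)) (x : Cantor) : Cantor :=
  fun n => if h : n < σ.length then σ.get ⟨n, h⟩ else x (n - σ.length)

/-- Bitwise XOR of a finite string with an element of Cantor space. -/
def xorL (σ : List (ZMod 2)) (x : Cantor) : Cantor :=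
  fun n => (if h : n < σ.length then σ.get ⟨n, h⟩ else 0) + x n

/-- `A` is a tail set. -/
def IsTailSet (A : Set Cantor) : Prop :=
  ∀ σ τ : List (ZMod 2), σ.length = τ.length → ∀ x : Cantor, app σ x ∈ A → app τ x ∈ A

/-- A fixed bijection `ℕ → ℚ`. -/
def ratOf (n : ℕ) : ℚ := Denumerable.ofNat ℚ n

/-- `a` is a fast-Cauchy name for the real `r`. -/
def RealName (a : ℕ → ℕ) (r : ℝ) : Prop :=
  Tendsto (fun i => (ratOf (a i) : ℝ)) atTop (nhds r) ∧
    ∀ i j : ℕ, i < j → |(ratOf (a i) : ℝ) - (ratOf (a j) : ℝ)| < (2 : ℝ) ^ (-(i : ℤ))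

/-- The `n`-th column of `x`. -/
def col (x : ℕ → ℕ) (n : ℕ) : ℕ → ℕ := fun k => x (Nat.pair n k)

/-- The name of the `n`-th open set coded in a Schnorr name `x`. -/
def nm (x : ℕ → ℕ) (n : ℕ) : ℕ → ℕ := col x (2 * n)

/-- The name of the measure of the `n`-th open set coded in a Schnorr name `x`. -/
def mv (x : ℕ → ℕ) (n : ℕ) : ℕ → ℕ := col x (2 * n + 1)

/-- `x` is a name for the Schnorr null set `N`. -/
def SchnorrName (x : ℕ → ℕ) (N : Set Cantor) : Prop :=
  N = (⋂ n, opn (nm x n)) ∧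
    (∀ n, RealName (mv x n) ((lam (opn (nm x n))).toReal)) ∧
    Tendsto (fun n => lam (opn (nm x n))) atTop (nhds 0)

end Paper

namespace Paper

/-- The set of names of open sets of measure exactly `q`. -/
def Rset (q : ℝ) : Set (ℕ → ℕ) := {f | lam (opn f) = ENNReal.ofReal q}

/-- Conditions of the measure-theoretic forcing `ℙ` (definability constraints dropped). -/
def IsCond (σ : List ℕ) (R : Set (ℕ → ℕ)) (q : ℝ) : Prop :=
  0 < q ∧ q < 1 / 2 ∧ R.Nonempty ∧ R ⊆ Rset q ∧ ∀ f ∈ R, Uhat σ ⊆ opn f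

/-- The extension relation of `ℙ`: `(τ, S, r) ≤ (σ, R, q)`. -/
def Ext (τ : List ℕ) (S : Set (ℕ → ℕ)) (r : ℝ)
    (σ : List ℕ) (R : Set (ℕ → ℕ)) (q : ℝ) : Prop :=
  σ <+: τ ∧ ∀ f ∈ S, ∃ g ∈ R, opn g ⊆ opn f

end Paper


namespace Paper
open scoped ENNReal

lemma measurableSet_cyl (τ : List (ZMod 2)) : MeasurableSet (cyl τ) := by
  have : cyl τ = ⋂ i : Fin τ.length, {x : Cantor | x i = τ.get i} := by
    ext x; simp [cyl, Set.mem_iInter]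
  rw [this]
  refine MeasurableSet.iInter fun i => ?_
  have : {x : Cantor | x i = τ.get i} = (fun x : Cantor => x (i : ℕ)) ⁻¹' {τ.get i} := rfl
  rw [this]
  exact measurable_pi_apply (i : ℕ) (MeasurableSet.singleton _)

lemma cyl_nil : cyl ([] : List (ZMod 2)) = Set.univ := by
  ext x; simp only [cyl, Set.mem_setOf_eq, Set.mem_univ, iff_true]
  intro i; exact absurd i.2 (by simp)

lemma lam_univ : lam (Set.univ : Set Cantor) = 1 := by
  have h1 : (Measure.addHaar : Measure Cantor) Set.univ ≠ 0 :=
    (isOpen_univ.measure_pos (Measure.addHaar : Measure Cantor) Set.univ_nonempty).ne'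
  have h2 : (Measure.addHaar : Measure Cantor) Set.univ ≠ ⊤ :=
    (IsCompact.measure_lt_top isCompact_univ).ne
  simp [lam, ENNReal.inv_mul_cancel h1 h2]

lemma lam_preimage_add (d : Cantor) (A : Set Cantor) :
    lam ((fun x => d + x) ⁻¹' A) = lam A := by
  simp [lam, measure_preimage_add]

lemma mem_cyl_append (τ : List (ZMod 2)) (b : ZMod 2) (x : Cantor) :
    x ∈ cyl (τ ++ [b]) ↔ x ∈ cyl τ ∧ x τ.length = b := by
  constructor
  · intro h
    refine ⟨fun i => ?_, ?_⟩
    · have := h ⟨i, by simp⟩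
      simpa [List.getElem_append, i.2] using this
    · have := h ⟨τ.length, by simp⟩
      simpa [List.getElem_append] using this
  · rintro ⟨h1, h2⟩ i
    rcases Nat.lt_or_ge (i : ℕ) τ.length with hi | hi
    · have := h1 ⟨i, hi⟩
      simp [List.getElem_append, hi]; simpa using this
    · have : (i : ℕ) = τ.length := by have := i.2; simp at this; omega
      simp [List.getElem_append, this]
      simpa [this] using h2

lemma cyl_split (τ : List (ZMod 2)) :
    cyl τ = cyl (τ ++ [0]) ∪ cyl (τ ++ [1]) := by
  ext x
  simp only [Set.mem_union, mem_cyl_append]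
  constructor
  · intro h
    rcases (by decide : ∀ a : ZMod 2, a = 0 ∨ a = 1) (x τ.length) with h0 | h0
    · exact Or.inl ⟨h, h0⟩
    · exact Or.inr ⟨h, h0⟩
  · rintro (⟨h, _⟩ | ⟨h, _⟩) <;> exact h

lemma cyl_disj (τ : List (ZMod 2)) :
    Disjoint (cyl (τ ++ [0])) (cyl (τ ++ [1])) := by
  rw [Set.disjoint_left]
  intro x h0 h1
  have e0 := (mem_cyl_append τ 0 x).1 h0
  have e1 := (mem_cyl_append τ 1 x).1 h1
  rw [e0.2] at e1
  exact absurd e1.2 (by decide)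

lemma lam_cyl_append_eq (τ : List (ZMod 2)) :
    lam (cyl (τ ++ [0])) = lam (cyl (τ ++ [1])) := by
  have key : (fun x : Cantor => (fun n => if n = τ.length then (1 : ZMod 2) else 0) + x) ⁻¹'
      cyl (τ ++ [1]) = cyl (τ ++ [0]) := by
    ext x
    simp only [Set.mem_preimage, mem_cyl_append]
    constructor
    · rintro ⟨h1, h2⟩
      refine ⟨fun i => ?_, ?_⟩
      · have := h1 i
        have hne : (i : ℕ) ≠ τ.length := Nat.ne_of_lt i.2
        simpa [Pi.add_apply, hne] using this
      · simpa [Pi.add_apply] using h2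
    · rintro ⟨h1, h2⟩
      refine ⟨fun i => ?_, ?_⟩
      · have := h1 i
        have hne : (i : ℕ) ≠ τ.length := Nat.ne_of_lt i.2
        simpa [Pi.add_apply, hne] using this
      · simp [Pi.add_apply, h2]
  rw [← key, lam_preimage_add]

lemma lam_cyl (τ : List (ZMod 2)) : lam (cyl τ) = 2⁻¹ ^ τ.length := by
  induction τ using List.reverseRecOn with
  | nil => simp [cyl_nil, lam_univ]
  | append_singleton τ b ih =>
    have hsplit := cyl_split τ
    have hm : lam (cyl τ) = lam (cyl (τ ++ [0])) + lam (cyl (τ ++ [1])) := by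
      rw [hsplit, measure_union (cyl_disj τ) (measurableSet_cyl _)]
    rw [← lam_cyl_append_eq τ] at hm
    have h2 : lam (cyl (τ ++ [0])) = 2⁻¹ ^ (τ.length + 1) := by
      have : (2:ℝ≥0∞)⁻¹ ^ τ.length = lam (cyl (τ ++ [0])) + lam (cyl (τ ++ [0])) := by
        rw [← ih, hm]
      rw [pow_succ]
      rw [this, ← two_mul, mul_comm (2:ℝ≥0∞), mul_assoc,
        ENNReal.mul_inv_cancel (by norm_num) (by norm_num), mul_one]
    rcases (by decide : ∀ a : ZMod 2, a = 0 ∨ a = 1) b with hb | hb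
    · subst hb; simpa using h2
    · subst hb; rw [← lam_cyl_append_eq τ]; simpa using h2

lemma m_split (E : Set Cantor) (hE : MeasurableSet E) (τ : List (ZMod 2)) :
    lam (cyl τ \ E) = lam (cyl (τ ++ [0]) \ E) + lam (cyl (τ ++ [1]) \ E) := by
  rw [cyl_split τ, Set.union_diff_distrib,
    measure_union ((cyl_disj τ).mono Set.diff_subset Set.diff_subset)
      ((measurableSet_cyl _).diff hE)]

open Classical in
/-- Greedy descent path: always move to the child cylinder with larger measure outside `E`. -/
noncomputable def gpath (E : Set Cantor) : ℕ → List (ZMod 2)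
  | 0 => []
  | (j+1) =>
      if lam (cyl (gpath E j ++ [1]) \ E) ≤ lam (cyl (gpath E j ++ [0]) \ E)
      then gpath E j ++ [0] else gpath E j ++ [1]

lemma gpath_len (E : Set Cantor) : ∀ j, (gpath E j).length = j := by
  intro j; induction j with
  | zero => rfl
  | succ k ih =>
    rw [gpath]
    split <;> simp [ih]

lemma gpath_half (E : Set Cantor) (hE : MeasurableSet E) (j : ℕ) :
    lam (cyl (gpath E j) \ E) ≤ 2 * lam (cyl (gpath E (j+1)) \ E) := by
  have hs := m_split E hE (gpath E j)
  rw [gpath]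
  split
  · rename_i h
    rw [hs, two_mul]; exact add_le_add le_rfl h
  · rename_i h
    rw [hs, two_mul]; exact add_le_add (le_of_not_ge h) le_rfl

lemma step_lemma (E : Set Cantor) (hE : MeasurableSet E) (t' : ℝ≥0∞) (ht1 : t' ≤ 1)
    (hlt : lam E < t') :
    ∃ τ : List (ZMod 2), lam (cyl τ \ E) ≤ t' - lam E ∧ t' - lam E ≤ 2 * lam (cyl τ \ E) := by
  set δ := t' - lam E with hδ
  have hδ0 : 0 < δ := tsub_pos_of_lt hlt
  have hub : ∀ j, lam (cyl (gpath E j) \ E) ≤ 2⁻¹ ^ j := by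
    intro j
    calc lam (cyl (gpath E j) \ E) ≤ lam (cyl (gpath E j)) := measure_mono Set.diff_subset
    _ = 2⁻¹ ^ j := by rw [lam_cyl, gpath_len]
  have hexists : ∃ j, lam (cyl (gpath E j) \ E) ≤ δ := by
    obtain ⟨n, hn⟩ := ENNReal.exists_inv_two_pow_lt hδ0.ne'
    exact ⟨n, le_of_lt (lt_of_le_of_lt (hub n) hn)⟩
  have hbase : δ ≤ lam (cyl (gpath E 0) \ E) := by
    show δ ≤ lam (cyl [] \ E)
    rw [cyl_nil, measure_diff (Set.subset_univ E) hE.nullMeasurableSet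
      (ne_top_of_lt (lt_of_lt_of_le hlt (ht1.trans le_top))), lam_univ]
    exact tsub_le_tsub_right ht1 _
  classical
  refine ⟨gpath E (Nat.find hexists), Nat.find_spec hexists, ?_⟩
  rcases Nat.eq_zero_or_pos (Nat.find hexists) with hj | hj
  · rw [hj]
    calc δ ≤ lam (cyl (gpath E 0) \ E) := hbase
      _ ≤ 2 * lam (cyl (gpath E 0) \ E) := le_mul_of_one_le_left zero_le one_le_two
  · obtain ⟨k, hk⟩ := Nat.exists_eq_succ_of_ne_zero hj.ne'
    have hklt : ¬ lam (cyl (gpath E k) \ E) ≤ δ := Nat.find_min hexists (by omega)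
    rw [hk]
    calc δ ≤ lam (cyl (gpath E k) \ E) := le_of_lt (lt_of_not_ge hklt)
      _ ≤ 2 * lam (cyl (gpath E (k+1)) \ E) := gpath_half E hE k

lemma full_step (t' : ℝ≥0∞) (ht1 : t' ≤ 1) (τ0 : List (ZMod 2)) (E : Set Cantor)
    (hE : MeasurableSet E) (hsub : cyl τ0 ⊆ E) (hle : lam E ≤ t') :
    ∃ τ : List (ZMod 2), lam (E ∪ cyl τ) ≤ t' ∧
      t' - lam (E ∪ cyl τ) ≤ (t' - lam E) / 2 := by
  rcases eq_or_lt_of_le hle with heq | hlt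
  · refine ⟨τ0, ?_, ?_⟩
    · rw [Set.union_eq_self_of_subset_right hsub, heq]
    · rw [Set.union_eq_self_of_subset_right hsub, heq, tsub_self]
      exact zero_le
  · obtain ⟨τ, h1, h2⟩ := step_lemma E hE t' ht1 hlt
    set δ := t' - lam E with hδ
    set m := lam (cyl τ \ E) with hm
    have hδtop : δ ≠ ⊤ := ne_top_of_le_ne_top (by simp) (le_trans (tsub_le_self) ht1)
    have hunion : lam (E ∪ cyl τ) = lam E + m := by
      rw [← Set.union_diff_self, measure_union disjoint_sdiff_self_right
        ((measurableSet_cyl τ).diff hE)]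
    refine ⟨τ, ?_, ?_⟩
    · rw [hunion]
      calc lam E + m ≤ lam E + δ := add_le_add le_rfl h1
        _ = t' := add_tsub_cancel_of_le hle
    · rw [hunion, tsub_add_eq_tsub_tsub_swap]
      have hhalf : δ / 2 ≤ m := by
        rw [ENNReal.div_le_iff (by norm_num) (by norm_num), mul_comm]
        exact h2
      calc t' - m - lam E ≤ t' - δ/2 - lam E := by
            exact tsub_le_tsub_right (tsub_le_tsub_left hhalf t') _
        _ = t' - lam E - δ/2 := by rw [tsub_right_comm]
        _ = δ - δ/2 := by rw [hδ]
        _ = δ / 2 := ENNReal.sub_half hδtop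

lemma topping (F0 : ℕ → List (ZMod 2)) (t' : ℝ≥0∞) (ht1 : t' ≤ 1)
    (hle : lam (⋃ n, cyl (F0 n)) ≤ t') :
    ∃ F : ℕ → List (ZMod 2),
      (⋃ n, cyl (F0 n)) ⊆ (⋃ n, cyl (F n)) ∧ lam (⋃ n, cyl (F n)) = t' := by
  classical
  set W : Set Cantor := ⋃ n, cyl (F0 n) with hW
  have hWmeas : MeasurableSet W := MeasurableSet.iUnion fun n => measurableSet_cyl _
  set T := {E : Set Cantor // MeasurableSet E ∧ cyl (F0 0) ⊆ E ∧ lam E ≤ t'} with hT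
  have hstep : ∀ X : T, ∃ p : T × List (ZMod 2),
      p.1.1 = X.1 ∪ cyl p.2 ∧
      t' - lam p.1.1 ≤ (t' - lam X.1) / 2 := by
    rintro ⟨E, hE, hsub, hles⟩
    obtain ⟨τ, h1, h2⟩ := full_step t' ht1 (F0 0) E hE hsub hles
    exact ⟨⟨⟨E ∪ cyl τ, (hE.union (measurableSet_cyl τ)),
      hsub.trans Set.subset_union_left, h1⟩, τ⟩, rfl, h2⟩
  choose nxt hnxt using hstep
  have hX0 : MeasurableSet W ∧ cyl (F0 0) ⊆ W ∧ lam W ≤ t' :=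
    ⟨hWmeas, Set.subset_iUnion (fun n => cyl (F0 n)) 0, hle⟩
  let seq : ℕ → T := fun k => Nat.rec ⟨W, hX0⟩ (fun _ X => (nxt X).1) k
  have hseq0 : (seq 0).1 = W := by rfl
  have hseqS : ∀ k, (seq (k+1)).1 =
      (seq k).1 ∪ cyl (nxt (seq k)).2 := fun k => (hnxt (seq k)).1
  -- the added cylinders
  set C : ℕ → List (ZMod 2) := fun k => (nxt (seq k)).2 with hC
  set E : ℕ → Set Cantor := fun k => (seq k).1 with hE
  have hES : ∀ k, E (k+1) = E k ∪ cyl (C k) := hseqS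
  have hmono : Monotone E := monotone_nat_of_le_succ fun k => by
    rw [hES k]; exact Set.subset_union_left
  have hgap : ∀ k, t' - lam (E k) ≤ 2⁻¹ ^ k := by
    intro k; induction k with
    | zero =>
      calc t' - lam (E 0) ≤ t' := tsub_le_self
        _ ≤ 1 := ht1
        _ = 2⁻¹ ^ 0 := by norm_num
    | succ k ih =>
      calc t' - lam (E (k+1)) ≤ (t' - lam (E k)) / 2 := (hnxt (seq k)).2
        _ ≤ (2⁻¹ ^ k) / 2 := by exact ENNReal.div_le_div_right ih 2
        _ = 2⁻¹ ^ (k+1) := by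
            rw [pow_succ, ENNReal.div_eq_inv_mul, mul_comm]
  have hEle : ∀ k, lam (E k) ≤ t' := fun k => (seq k).2.2.2
  have hE0 : E 0 = W := hseq0
  -- measure of the union is exactly t'
  have hiSup : lam (⋃ k, E k) = ⨆ k, lam (E k) :=
    Directed.measure_iUnion (Monotone.directed_le hmono)
  have hsup_eq : (⨆ k, lam (E k)) = t' := by
    apply le_antisymm (iSup_le hEle)
    refine ENNReal.le_of_forall_pos_le_add fun ε hε _ => ?_
    obtain ⟨k, hk⟩ := ENNReal.exists_inv_two_pow_lt (by exact_mod_cast hε.ne' : (ε:ℝ≥0∞) ≠ 0)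
    have h1 : t' ≤ lam (E k) + 2⁻¹ ^ k := by
      rw [← tsub_le_iff_left]
      exact hgap k
    calc t' ≤ lam (E k) + 2⁻¹ ^ k := h1
      _ ≤ (⨆ j, lam (E j)) + ε := add_le_add (le_iSup (fun j => lam (E j)) k) hk.le
  -- identify the union
  have hEunion : (⋃ k, E k) = W ∪ ⋃ k, cyl (C k) := by
    apply Set.Subset.antisymm
    · refine Set.iUnion_subset fun k => ?_
      induction k with
      | zero => rw [hE0]; exact Set.subset_union_left
      | succ k ih =>
        rw [hES k]
        exact Set.union_subset ih
          ((Set.subset_iUnion (fun j => cyl (C j)) k).trans Set.subset_union_right)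
    · refine Set.union_subset ?_ (Set.iUnion_subset fun k => ?_)
      · rw [← hE0]; exact Set.subset_iUnion E 0
      · refine Set.Subset.trans ?_ (Set.subset_iUnion E (k+1))
        rw [hES k]; exact Set.subset_union_right
  refine ⟨fun n => if Even n then F0 (n / 2) else C (n / 2), ?_, ?_⟩
  · intro x hx
    rw [Set.mem_iUnion] at hx ⊢
    obtain ⟨n, hn⟩ := hx
    exact ⟨2 * n, by simpa [Nat.even_iff, Nat.mul_div_cancel_left] using hn⟩
  · have hsetgoal : (⋃ n, cyl (if Even n then F0 (n / 2) else C (n / 2))) = ⋃ k, E k := by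
      rw [hEunion]
      apply Set.Subset.antisymm
      · refine Set.iUnion_subset fun n => ?_
        rcases Nat.even_or_odd n with he | ho
        · rw [if_pos he]
          exact (Set.subset_iUnion (fun j => cyl (F0 j)) (n/2)).trans Set.subset_union_left
        · rw [if_neg (Nat.not_even_iff_odd.2 ho)]
          exact (Set.subset_iUnion (fun j => cyl (C j)) (n/2)).trans Set.subset_union_right
      · refine Set.union_subset (Set.iUnion_subset fun n => ?_) (Set.iUnion_subset fun k => ?_)
        · refine Set.Subset.trans ?_
            (Set.subset_iUnion (fun n => cyl (if Even n then F0 (n / 2) else C (n / 2))) (2*n))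
          simp [Nat.mul_div_cancel_left]
        · refine Set.Subset.trans ?_
            (Set.subset_iUnion (fun n => cyl (if Even n then F0 (n / 2) else C (n / 2))) (2*k+1))
          have : ¬ Even (2*k+1) := by simp [Nat.even_iff]
          simp [this, Nat.mul_add_div]
    rw [hsetgoal, hiSup, hsup_eq]

lemma opn_encode (F : ℕ → List (ZMod 2)) :
    ∃ g : ℕ → ℕ, opn g = ⋃ n, cyl (F n) := by
  choose g hg using fun n =>
    (⟨_, Denumerable.ofNat_encode (F n)⟩ : ∃ m, Denumerable.ofNat (List (ZMod 2)) m = F n)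
  refine ⟨g, ?_⟩
  unfold opn strOf
  exact Set.iUnion_congr fun n => by rw [hg n]

end Paper

/-- given a condition `(σ, R, q)`, a (normalized) Schnorr name `x`
for a null set, and `i` with `2^{-i} + q < 1/2`, the triple `(σ, S, q + 2^{-i})`
with `S = {g ∈ R_{q+2^{-i}} : Û(σ) ∪ U(f_i) ⊆ U(g) ∧ ∃ h ∈ R, U(h) ⊆ U(g)}`
is a condition extending `(σ, R, q)`; in particular `S` is nonempty. -/
theorem null_cover_extension (σ : List ℕ) (R : Set (ℕ → ℕ)) (q : ℝ)
    (hcond : Paper.IsCond σ R q) (x : ℕ → ℕ) (N : Set Paper.Cantor)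
    (hx : Paper.SchnorrName x N) (i : ℕ)
    (hnorm : Paper.lam (Paper.opn (Paper.nm x i)) ≤ ENNReal.ofReal ((2 : ℝ) ^ (-(i : ℤ))))
    (hsmall : (2 : ℝ) ^ (-(i : ℤ)) + q < 1 / 2) :
    Paper.IsCond σ
      {g ∈ Paper.Rset (q + (2 : ℝ) ^ (-(i : ℤ))) |
        Paper.Uhat σ ∪ Paper.opn (Paper.nm x i) ⊆ Paper.opn g ∧
          ∃ h ∈ R, Paper.opn h ⊆ Paper.opn g}
      (q + (2 : ℝ) ^ (-(i : ℤ))) ∧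
    Paper.Ext σ
      {g ∈ Paper.Rset (q + (2 : ℝ) ^ (-(i : ℤ))) |
        Paper.Uhat σ ∪ Paper.opn (Paper.nm x i) ⊆ Paper.opn g ∧
          ∃ h ∈ R, Paper.opn h ⊆ Paper.opn g}
      (q + (2 : ℝ) ^ (-(i : ℤ))) σ R q := by
  classical
  obtain ⟨hq0, hq2, ⟨h, hhR⟩, hRsub, hUsub⟩ := hcond
  have hp0 : (0:ℝ) < (2 : ℝ) ^ (-(i : ℤ)) := zpow_pos (by norm_num) _
  set p : ℝ := (2 : ℝ) ^ (-(i : ℤ)) with hpdef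
  set t' : ENNReal := ENNReal.ofReal (q + p) with ht'def
  have ht1 : t' ≤ 1 := by
    rw [ht'def]
    exact ENNReal.ofReal_le_one.2 (by linarith)
  -- the base open set W = opn h ∪ opn (nm x i) as a union of cylinders
  set F0 : ℕ → List (ZMod 2) := fun n =>
    if Even n then Paper.strOf (h (n/2)) else Paper.strOf (Paper.nm x i (n/2)) with hF0
  have hWeq : (⋃ n, Paper.cyl (F0 n)) = Paper.opn h ∪ Paper.opn (Paper.nm x i) := by
    apply Set.Subset.antisymm
    · refine Set.iUnion_subset fun n => ?_
      rcases Nat.even_or_odd n with he | ho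
      · simp only [hF0]; rw [if_pos he]
        exact (Set.subset_iUnion (fun m => Paper.cyl (Paper.strOf (h m))) (n/2)).trans
          Set.subset_union_left
      · simp only [hF0]; rw [if_neg (Nat.not_even_iff_odd.2 ho)]
        exact (Set.subset_iUnion (fun m => Paper.cyl (Paper.strOf (Paper.nm x i m))) (n/2)).trans
          Set.subset_union_right
    · refine Set.union_subset (Set.iUnion_subset fun m => ?_) (Set.iUnion_subset fun m => ?_)
      · refine Set.Subset.trans ?_ (Set.subset_iUnion (fun n => Paper.cyl (F0 n)) (2*m))
        simp only [hF0]; simp [Nat.mul_div_cancel_left]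
      · refine Set.Subset.trans ?_ (Set.subset_iUnion (fun n => Paper.cyl (F0 n)) (2*m+1))
        simp only [hF0]
        have : ¬ Even (2*m+1) := by simp [Nat.even_iff]
        simp [this, Nat.mul_add_div]
  have hlamh : Paper.lam (Paper.opn h) = ENNReal.ofReal q := hRsub hhR
  have hWle : Paper.lam (⋃ n, Paper.cyl (F0 n)) ≤ t' := by
    rw [hWeq]
    calc Paper.lam (Paper.opn h ∪ Paper.opn (Paper.nm x i))
        ≤ Paper.lam (Paper.opn h) + Paper.lam (Paper.opn (Paper.nm x i)) := measure_union_le _ _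
      _ ≤ ENNReal.ofReal q + ENNReal.ofReal p := add_le_add hlamh.le hnorm
      _ = t' := by rw [ht'def, ENNReal.ofReal_add (le_of_lt hq0) (le_of_lt hp0)]
  obtain ⟨F, hFsub, hFmeas⟩ := Paper.topping F0 t' ht1 hWle
  obtain ⟨g, hopng⟩ := Paper.opn_encode F
  have hWsubg : Paper.opn h ∪ Paper.opn (Paper.nm x i) ⊆ Paper.opn g := by
    rw [hopng, ← hWeq]; exact hFsub
  have hgS : g ∈ {g ∈ Paper.Rset (q + p) |
      Paper.Uhat σ ∪ Paper.opn (Paper.nm x i) ⊆ Paper.opn g ∧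
        ∃ h ∈ R, Paper.opn h ⊆ Paper.opn g} := by
    refine ⟨?_, ?_, h, hhR, ?_⟩
    · show Paper.lam (Paper.opn g) = ENNReal.ofReal (q + p)
      rw [hopng, hFmeas, ht'def]
    · exact Set.union_subset
        ((hUsub h hhR).trans (Set.subset_union_left.trans hWsubg))
        (Set.subset_union_right.trans hWsubg)
    · exact Set.subset_union_left.trans hWsubg
  constructor
  · refine ⟨by linarith, by linarith, ⟨g, hgS⟩, fun f hf => hf.1, fun f hf => ?_⟩
    exact (Set.subset_union_left.trans hf.2.1)
  · exact ⟨List.prefix_refl σ, fun f hf => hf.2.2⟩
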